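/- arXiv:2401.03487 — 6 statements merged into one kernel-verified Lean document; each statement's English description precedes it below -/
import Mathlib

section
/- Let p be a positive matrix semigroup over a countable index set I, and suppose j ∈ I satisfies p_{jj}(t) = 0 for all t > 0. Then for every t > 0, every i, k ∈ I, every sequence (α_n) of positive reals, and every N ∈ ℕ: p_{ik}(t + Σ_{n=1}^N α_n) = Σ_{n=1}^N p_{ij}(t + Σ_{m=1}^{n-1} α_m) · p_{jk}(Σ_{m=n}^N α_m) + Σ_{k₁,…,k_N ∈ I∖{j}} p_{i k₁}(t) · p_{k₁ k₂}(α₁) ⋯ p_{k_{N-1} k_N}(α_{N-1}) · p_{k_N k}(α_N). -/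
/-- A positive matrix semigroup over an index set `I`: a family of nonnegative
functions `p i j : (0,∞) → [0,∞)`, continuous on `(0,∞)`, satisfying the
Chapman–Kolmogorov equation (with convergent sums). -/
structure PosMatrixSemigroup (I : Type*) where
  p : I → I → ℝ → ℝ
  nonneg : ∀ i j t, 0 < t → 0 ≤ p i j t
  cont : ∀ i j, ContinuousOn (fun t => p i j t) (Set.Ioi (0 : ℝ))
  summable : ∀ i j t s, 0 < t → 0 < s → Summable (fun k => p i k t * p k j s)
  chapman : ∀ i j t s, 0 < t → 0 < s → p i j (t + s) = ∑' k, p i k t * p k j s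

open scoped ENNReal

namespace Stmt3Aux

variable {I : Type*} [Countable I] (P : PosMatrixSemigroup I)

noncomputable def q (i k : I) (t : ℝ) : ℝ≥0∞ := ENNReal.ofReal (P.p i k t)

lemma q_ne_top (i k : I) (t : ℝ) : q P i k t ≠ ⊤ := ENNReal.ofReal_ne_top

lemma q_chapman (i k : I) {t s : ℝ} (ht : 0 < t) (hs : 0 < s) :
    q P i k (t + s) = ∑' l, q P i l t * q P l k s := by
  unfold q
  rw [P.chapman i k t s ht hs,
    ENNReal.ofReal_tsum_of_nonneg
      (fun l => mul_nonneg (P.nonneg _ _ _ ht) (P.nonneg _ _ _ hs))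
      (P.summable i k t s ht hs)]
  exact tsum_congr fun l => ENNReal.ofReal_mul (P.nonneg _ _ _ ht)

lemma tsum_split (j : I) (g : I → ℝ≥0∞) :
    ∑' l, g l = g j + ∑' l : {l : I // l ≠ j}, g l := by
  classical
  rw [ENNReal.tsum_eq_add_tsum_ite j]
  congr 1
  have h1 : (∑' (x : I), if x = j then 0 else g x) = ∑' x, ({l : I | l ≠ j}).indicator g x := by
    refine tsum_congr fun l => ?_
    by_cases h : l = j <;> simp [h, Set.indicator]
  exact h1.trans (tsum_subtype {l : I | l ≠ j} g).symm

lemma subtype_chapman (j : I) (hjj : ∀ t, 0 < t → P.p j j t = 0) (k : I)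
    {s u : ℝ} (hs : 0 < s) (hu : 0 < u) :
    ∑' l : {l : I // l ≠ j}, q P j l s * q P l k u = q P j k (s + u) := by
  rw [q_chapman P j k hs hu, tsum_split j (fun l => q P j l s * q P l k u)]
  simp [q, hjj s hs]


def snocEquiv (I' : Type*) (M : ℕ) : I' × (Fin (M + 1) → I') ≃ (Fin (M + 2) → I') where
  toFun p m := if h : m.val < M + 1 then p.2 ⟨m.val, h⟩ else p.1
  invFun g := (g ⟨M + 1, by omega⟩, fun m => g ⟨m.val, by omega⟩)
  left_inv p := by
    obtain ⟨l, f⟩ := p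
    dsimp only
    simp only [Prod.mk.injEq]
    constructor
    · rw [dif_neg (by omega)]
    · funext m
      rw [dif_pos m.isLt]
  right_inv g := by
    funext m
    dsimp only
    by_cases h : m.val < M + 1
    · rw [dif_pos h]
    · rw [dif_neg h]
      congr 1
      exact Fin.ext (show M + 1 = m.val by have := m.isLt; omega)

lemma step (j : I) (hjj : ∀ t, 0 < t → P.p j j t = 0)
    (t : ℝ) (ht : 0 < t) (i : I) (α : ℕ → ℝ) (hα : ∀ n, 0 < α n) (M : ℕ) (k : I)
    (ih : ∀ k : I, q P i k (t + ∑ n ∈ Finset.Icc 1 (M + 1), α n) =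
      (∑ n ∈ Finset.Icc 1 (M + 1),
        q P i j (t + ∑ m ∈ Finset.Icc 1 (n - 1), α m) *
          q P j k (∑ m ∈ Finset.Icc n (M + 1), α m)) +
      ∑' f : Fin (M + 1) → {l : I // l ≠ j},
        q P i (f ⟨0, by omega⟩) t *
          (∏ m : Fin M,
            q P (f ⟨m.val, by have := m.isLt; omega⟩)
              (f ⟨m.val + 1, by have := m.isLt; omega⟩) (α (m.val + 1))) *
          q P (f ⟨M, by omega⟩) k (α (M + 1))) :
    (∑' l : {l : I // l ≠ j},
        q P i l (t + ∑ n ∈ Finset.Icc 1 (M + 1), α n) * q P l k (α (M + 1 + 1)))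
      = (∑ n ∈ Finset.Icc 1 (M + 1),
          q P i j (t + ∑ m ∈ Finset.Icc 1 (n - 1), α m) *
            q P j k (∑ m ∈ Finset.Icc n (M + 1 + 1), α m)) +
        ∑' f : Fin (M + 1 + 1) → {l : I // l ≠ j},
          q P i (f ⟨0, by omega⟩) t *
            (∏ m : Fin (M + 1),
              q P (f ⟨m.val, by have := m.isLt; omega⟩)
                (f ⟨m.val + 1, by have := m.isLt; omega⟩) (α (m.val + 1))) *
            q P (f ⟨M + 1, by omega⟩) k (α (M + 1 + 1)) := by
  have hA : (∑' l : {l : I // l ≠ j},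
        ((∑ n ∈ Finset.Icc 1 (M + 1),
          q P i j (t + ∑ m ∈ Finset.Icc 1 (n - 1), α m) *
            q P j (↑l) (∑ m ∈ Finset.Icc n (M + 1), α m)) * q P (↑l) k (α (M + 1 + 1))))
      = ∑ n ∈ Finset.Icc 1 (M + 1),
          q P i j (t + ∑ m ∈ Finset.Icc 1 (n - 1), α m) *
            q P j k (∑ m ∈ Finset.Icc n (M + 1 + 1), α m) := by
    calc (∑' l : {l : I // l ≠ j},
        ((∑ n ∈ Finset.Icc 1 (M + 1),
          q P i j (t + ∑ m ∈ Finset.Icc 1 (n - 1), α m) *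
            q P j (↑l) (∑ m ∈ Finset.Icc n (M + 1), α m)) * q P (↑l) k (α (M + 1 + 1))))
        = ∑' l : {l : I // l ≠ j}, ∑ n ∈ Finset.Icc 1 (M + 1),
            q P i j (t + ∑ m ∈ Finset.Icc 1 (n - 1), α m) *
              (q P j (↑l) (∑ m ∈ Finset.Icc n (M + 1), α m) * q P (↑l) k (α (M + 1 + 1))) := by
          refine tsum_congr fun l => ?_
          rw [Finset.sum_mul]
          exact Finset.sum_congr rfl fun n _ => by ring
      _ = ∑ n ∈ Finset.Icc 1 (M + 1), ∑' l : {l : I // l ≠ j},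
            q P i j (t + ∑ m ∈ Finset.Icc 1 (n - 1), α m) *
              (q P j (↑l) (∑ m ∈ Finset.Icc n (M + 1), α m) * q P (↑l) k (α (M + 1 + 1))) :=
          Summable.tsum_finsetSum fun _ _ => ENNReal.summable
      _ = ∑ n ∈ Finset.Icc 1 (M + 1),
            q P i j (t + ∑ m ∈ Finset.Icc 1 (n - 1), α m) *
              ∑' l : {l : I // l ≠ j},
                q P j (↑l) (∑ m ∈ Finset.Icc n (M + 1), α m) * q P (↑l) k (α (M + 1 + 1)) :=
          Finset.sum_congr rfl fun n _ => ENNReal.tsum_mul_left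
      _ = ∑ n ∈ Finset.Icc 1 (M + 1),
            q P i j (t + ∑ m ∈ Finset.Icc 1 (n - 1), α m) *
              q P j k (∑ m ∈ Finset.Icc n (M + 1 + 1), α m) := by
          refine Finset.sum_congr rfl fun n hn => ?_
          have hn' := (Finset.mem_Icc.1 hn).2
          have hw : 0 < ∑ m ∈ Finset.Icc n (M + 1), α m :=
            Finset.sum_pos (fun m _ => hα m) (Finset.nonempty_Icc.2 hn')
          rw [subtype_chapman P j hjj k hw (hα (M + 1 + 1)),
            ← Finset.sum_Icc_succ_top (by omega : n ≤ M + 1 + 1) α]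
  have hB : (∑' l : {l : I // l ≠ j},
        (∑' f : Fin (M + 1) → {l : I // l ≠ j},
          q P i (f ⟨0, by omega⟩) t *
            (∏ m : Fin M,
              q P (f ⟨m.val, by have := m.isLt; omega⟩)
                (f ⟨m.val + 1, by have := m.isLt; omega⟩) (α (m.val + 1))) *
            q P (f ⟨M, by omega⟩) (↑l) (α (M + 1))) * q P (↑l) k (α (M + 1 + 1)))
      = ∑' f : Fin (M + 1 + 1) → {l : I // l ≠ j},
          q P i (f ⟨0, by omega⟩) t *
            (∏ m : Fin (M + 1),
              q P (f ⟨m.val, by have := m.isLt; omega⟩)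
                (f ⟨m.val + 1, by have := m.isLt; omega⟩) (α (m.val + 1))) *
            q P (f ⟨M + 1, by omega⟩) k (α (M + 1 + 1)) := by
    rw [← Equiv.tsum_eq (snocEquiv {l : I // l ≠ j} M)
      (fun g : Fin (M + 1 + 1) → {l : I // l ≠ j} =>
        q P i (g ⟨0, by omega⟩) t *
          (∏ m : Fin (M + 1),
            q P (g ⟨m.val, by have := m.isLt; omega⟩)
              (g ⟨m.val + 1, by have := m.isLt; omega⟩) (α (m.val + 1))) *
          q P (g ⟨M + 1, by omega⟩) k (α (M + 1 + 1)))]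
    rw [ENNReal.tsum_prod']
    refine tsum_congr fun l => ?_
    rw [← ENNReal.tsum_mul_right]
    refine tsum_congr fun f => ?_
    -- pointwise equality
    simp only [snocEquiv, Equiv.coe_fn_mk]
    rw [Fin.prod_univ_castSucc]
    simp only [Fin.coe_castSucc, Fin.val_last]
    rw [dif_pos (show (0:ℕ) < M + 1 by omega), dif_neg (show ¬ (M + 1 < M + 1) by omega),
      dif_pos (show M < M + 1 by omega)]
    have hP : (∏ m : Fin M,
        q P (↑(if h : m.val < M + 1 then f ⟨m.val, h⟩ else l))
          (↑(if h : m.val + 1 < M + 1 then f ⟨m.val + 1, h⟩ else l)) (α (m.val + 1)))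
        = ∏ m : Fin M,
            q P (↑(f ⟨m.val, by have := m.isLt; omega⟩))
              (↑(f ⟨m.val + 1, by have := m.isLt; omega⟩)) (α (m.val + 1)) :=
      Finset.prod_congr rfl fun m _ => by
        rw [dif_pos (lt_trans m.isLt (Nat.lt_succ_self M)), dif_pos (Nat.succ_lt_succ m.isLt)]
    rw [hP]
    ring
  calc (∑' l : {l : I // l ≠ j},
        q P i l (t + ∑ n ∈ Finset.Icc 1 (M + 1), α n) * q P l k (α (M + 1 + 1)))
      = ∑' l : {l : I // l ≠ j},
          (((∑ n ∈ Finset.Icc 1 (M + 1),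
            q P i j (t + ∑ m ∈ Finset.Icc 1 (n - 1), α m) *
              q P j (↑l) (∑ m ∈ Finset.Icc n (M + 1), α m)) * q P (↑l) k (α (M + 1 + 1))) +
           ((∑' f : Fin (M + 1) → {l : I // l ≠ j},
            q P i (f ⟨0, by omega⟩) t *
              (∏ m : Fin M,
                q P (f ⟨m.val, by have := m.isLt; omega⟩)
                  (f ⟨m.val + 1, by have := m.isLt; omega⟩) (α (m.val + 1))) *
              q P (f ⟨M, by omega⟩) (↑l) (α (M + 1))) * q P (↑l) k (α (M + 1 + 1)))) := by
        refine tsum_congr fun l => ?_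
        rw [ih ↑l, add_mul]
    _ = _ := by
        rw [ENNReal.tsum_add, hA, hB]

lemma key (j : I) (hjj : ∀ t, 0 < t → P.p j j t = 0)
    (t : ℝ) (ht : 0 < t) (i : I) (α : ℕ → ℝ) (hα : ∀ n, 0 < α n)
    (N : ℕ) (hN : 1 ≤ N) (k : I) :
    q P i k (t + ∑ n ∈ Finset.Icc 1 N, α n) =
      (∑ n ∈ Finset.Icc 1 N,
        q P i j (t + ∑ m ∈ Finset.Icc 1 (n - 1), α m) *
          q P j k (∑ m ∈ Finset.Icc n N, α m)) +
      ∑' f : Fin N → {l : I // l ≠ j},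
        q P i (f ⟨0, hN⟩) t *
          (∏ m : Fin (N - 1),
            q P (f ⟨m.val, Nat.lt_of_lt_of_le m.isLt (Nat.sub_le N 1)⟩)
              (f ⟨m.val + 1, Nat.add_lt_of_lt_sub m.isLt⟩) (α (m.val + 1))) *
          q P (f ⟨N - 1, Nat.sub_lt hN Nat.one_pos⟩) k (α N) := by
  induction N, hN using Nat.le_induction generalizing k with
  | base =>
    simp only [Finset.Icc_self, Finset.sum_singleton, Nat.sub_self,
      Finset.Icc_eq_empty (by omega : ¬ (1:ℕ) ≤ 0), Finset.sum_empty, add_zero]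
    rw [q_chapman P i k ht (hα 1), tsum_split j]
    congr 1
    have h1 : (∑' l : {l : I // l ≠ j}, q P i (↑l) t * q P (↑l) k (α 1))
        = ∑' g : Fin 1 → {l : I // l ≠ j}, q P i (↑(g 0)) t * q P (↑(g 0)) k (α 1) := by
      rw [← Equiv.tsum_eq ((Equiv.funUnique (Fin 1) {l : I // l ≠ j}).symm)
        (fun g : Fin 1 → {l : I // l ≠ j} =>
        q P i (↑(g 0)) t * q P (↑(g 0)) k (α 1))]
      simp
    rw [h1]
    refine tsum_congr fun f => ?_
    have h0 : (⟨0, by omega⟩ : Fin 1) = 0 := rfl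
    have hp : (∏ m : Fin (1 - 1),
        q P (↑(f ⟨m.val, by have := m.isLt; omega⟩))
          (↑(f ⟨m.val + 1, by have := m.isLt; omega⟩)) (α (m.val + 1))) = 1 := by
      simp [show (1:ℕ) - 1 = 0 from rfl]
    rw [hp, h0, mul_one]
  | succ N hN ih =>
    obtain ⟨M, rfl⟩ : ∃ M, N = M + 1 := ⟨N - 1, by omega⟩
    simp only [Nat.add_sub_cancel] at ih ⊢
    have hSN : 0 < ∑ n ∈ Finset.Icc 1 (M+1), α n :=
      Finset.sum_pos (fun n _ => hα n) ⟨1, by simp⟩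
    have htS : 0 < t + ∑ n ∈ Finset.Icc 1 (M+1), α n := by linarith
    have hsum : (∑ n ∈ Finset.Icc 1 (M+1+1), α n)
        = (∑ n ∈ Finset.Icc 1 (M+1), α n) + α (M+1+1) :=
      Finset.sum_Icc_succ_top (by omega) α
    rw [hsum, ← add_assoc, q_chapman P i k htS (hα (M+1+1)),
      tsum_split j (fun l => q P i l (t + ∑ n ∈ Finset.Icc 1 (M+1), α n) * q P l k (α (M+1+1)))]
    -- abbreviations
    have hsplit : (∑' l : {l : I // l ≠ j},
          q P i l (t + ∑ n ∈ Finset.Icc 1 (M+1), α n) * q P l k (α (M+1+1)))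
        = (∑ n ∈ Finset.Icc 1 (M+1),
            q P i j (t + ∑ m ∈ Finset.Icc 1 (n - 1), α m) *
              q P j k (∑ m ∈ Finset.Icc n (M+1+1), α m)) +
          ∑' f : Fin (M+1+1) → {l : I // l ≠ j},
            q P i (f ⟨0, by omega⟩) t *
              (∏ m : Fin (M+1),
                q P (f ⟨m.val, by have := m.isLt; omega⟩)
                  (f ⟨m.val + 1, by have := m.isLt; omega⟩) (α (m.val + 1))) *
              q P (f ⟨M+1, by omega⟩) k (α (M+1+1)) :=
      step P j hjj t ht i α hα M k ih
    rw [hsplit, ← add_assoc]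
    congr 1
    rw [Finset.sum_Icc_succ_top (by omega : 1 ≤ M+1+1), add_comm]
    congr 1
    simp

end Stmt3Aux

theorem stmt3 {I : Type*} [Countable I] (P : PosMatrixSemigroup I) (j : I)
    (hjj : ∀ t, 0 < t → P.p j j t = 0)
    (t : ℝ) (ht : 0 < t) (i k : I) (α : ℕ → ℝ) (hα : ∀ n, 0 < α n)
    (N : ℕ) (hN : 1 ≤ N) :
    P.p i k (t + ∑ n ∈ Finset.Icc 1 N, α n) =
      (∑ n ∈ Finset.Icc 1 N,
        P.p i j (t + ∑ m ∈ Finset.Icc 1 (n - 1), α m) *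
          P.p j k (∑ m ∈ Finset.Icc n N, α m)) +
      ∑' f : Fin N → {l : I // l ≠ j},
        P.p i (f ⟨0, hN⟩) t *
          (∏ m : Fin (N - 1),
            P.p (f ⟨m.val, by have := m.isLt; omega⟩)
              (f ⟨m.val + 1, by have := m.isLt; omega⟩) (α (m.val + 1))) *
          P.p (f ⟨N - 1, by omega⟩) k (α N) := by
  classical
  have hsnn : ∀ b : ℕ, (0:ℝ) ≤ ∑ n ∈ Finset.Icc 1 b, α n :=
    fun b => Finset.sum_nonneg fun n _ => (hα n).le
  have hS : 0 < t + ∑ n ∈ Finset.Icc 1 N, α n := by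
    have := hsnn N; linarith
  have hkey := Stmt3Aux.key P j hjj t ht i α hα N hN k
  have hB : (∑' f : Fin N → {l : I // l ≠ j},
      Stmt3Aux.q P i (f ⟨0, hN⟩) t *
        (∏ m : Fin (N - 1),
          Stmt3Aux.q P (f ⟨m.val, by have := m.isLt; omega⟩)
            (f ⟨m.val + 1, by have := m.isLt; omega⟩) (α (m.val + 1))) *
        Stmt3Aux.q P (f ⟨N - 1, by omega⟩) k (α N))
      = ∑' f : Fin N → {l : I // l ≠ j}, ENNReal.ofReal (
        P.p i (f ⟨0, hN⟩) t *
          (∏ m : Fin (N - 1),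
            P.p (f ⟨m.val, by have := m.isLt; omega⟩)
              (f ⟨m.val + 1, by have := m.isLt; omega⟩) (α (m.val + 1))) *
          P.p (f ⟨N - 1, by omega⟩) k (α N)) := by
    refine tsum_congr fun f => ?_
    unfold Stmt3Aux.q
    rw [ENNReal.ofReal_mul (mul_nonneg (P.nonneg _ _ _ ht)
        (Finset.prod_nonneg fun m _ => P.nonneg _ _ _ (hα _))),
      ENNReal.ofReal_mul (P.nonneg _ _ _ ht),
      ENNReal.ofReal_prod_of_nonneg (fun m _ => P.nonneg _ _ _ (hα _))]
  rw [hB] at hkey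
  have hA_ne : (∑ n ∈ Finset.Icc 1 N,
      Stmt3Aux.q P i j (t + ∑ m ∈ Finset.Icc 1 (n - 1), α m) *
        Stmt3Aux.q P j k (∑ m ∈ Finset.Icc n N, α m)) ≠ ⊤ :=
    (ENNReal.sum_lt_top.2 fun n _ =>
      ENNReal.mul_lt_top ENNReal.ofReal_lt_top ENNReal.ofReal_lt_top).ne
  have hB_ne : (∑' f : Fin N → {l : I // l ≠ j}, ENNReal.ofReal (
        P.p i (f ⟨0, hN⟩) t *
          (∏ m : Fin (N - 1),
            P.p (f ⟨m.val, by have := m.isLt; omega⟩)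
              (f ⟨m.val + 1, by have := m.isLt; omega⟩) (α (m.val + 1))) *
          P.p (f ⟨N - 1, by omega⟩) k (α N))) ≠ ⊤ := by
    intro htop
    rw [htop, add_top] at hkey
    exact ENNReal.ofReal_ne_top hkey
  have hconv := congrArg ENNReal.toReal hkey
  rw [ENNReal.toReal_add hA_ne hB_ne] at hconv
  rw [Stmt3Aux.q, ENNReal.toReal_ofReal (P.nonneg _ _ _ hS)] at hconv
  rw [ENNReal.toReal_sum (fun n _ => ENNReal.mul_ne_top (Stmt3Aux.q_ne_top P _ _ _) (Stmt3Aux.q_ne_top P _ _ _)),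
    ENNReal.tsum_toReal_eq (fun _ => ENNReal.ofReal_ne_top)] at hconv
  rw [hconv]
  congr 1
  · refine Finset.sum_congr rfl fun n hn => ?_
    have hn' := Finset.mem_Icc.1 hn
    have h1 : 0 < t + ∑ m ∈ Finset.Icc 1 (n - 1), α m := by
      have := hsnn (n - 1); linarith
    have h2 : 0 < ∑ m ∈ Finset.Icc n N, α m :=
      Finset.sum_pos (fun m _ => hα m) (Finset.nonempty_Icc.2 hn'.2)
    rw [Stmt3Aux.q, Stmt3Aux.q, ENNReal.toReal_mul,
      ENNReal.toReal_ofReal (P.nonneg _ _ _ h1), ENNReal.toReal_ofReal (P.nonneg _ _ _ h2)]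
  · refine tsum_congr fun f => ?_
    rw [ENNReal.toReal_ofReal]
    exact mul_nonneg (mul_nonneg (P.nonneg _ _ _ ht)
      (Finset.prod_nonneg fun m _ => P.nonneg _ _ _ (hα _))) (P.nonneg _ _ _ (hα _))
end

section
/- Let p be a positive matrix semigroup over a countable index set I, let j ∈ I satisfy p_{jj}(t) = 0 for all t > 0, and suppose there exist i ∈ I and t₁ > 0 with p_{ij}(t₁) > 0. Then p_{jk}(t) = 0 for all k ∈ I and all t > 0. -/
private lemma listSummable {I : Type*} {f : ℝ → I → ℝ} :
    ∀ (L : List ℝ), (∀ u ∈ L, Summable (f u)) →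
      Summable (fun m => (L.map (fun u => f u m)).sum) := by
  intro L
  induction L with
  | nil => intro _; simpa using summable_zero
  | cons u L ih =>
      intro h
      simp only [List.map_cons, List.sum_cons]
      exact (h u (by simp)).add (ih fun v hv => h v (by simp [hv]))

private lemma listTsum {I : Type*} {f : ℝ → I → ℝ} :
    ∀ (L : List ℝ), (∀ u ∈ L, Summable (f u)) →
      ∑' m, (L.map (fun u => f u m)).sum = (L.map (fun u => ∑' m, f u m)).sum := by
  intro L
  induction L with
  | nil => intro _; simp
  | cons u L ih =>
      intro h
      simp only [List.map_cons, List.sum_cons]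
      rw [Summable.tsum_add (h u (by simp)) (listSummable L fun v hv => h v (by simp [hv])),
        ih fun v hv => h v (by simp [hv])]

/-- Key additivity lemma: since `j` can never be revisited (`p j j ≡ 0`),
passages through `j` at distinct times give additive lower bounds. -/
private lemma key {I : Type*} [Countable I] (P : PosMatrixSemigroup I) (j b : I)
    (hjj : ∀ t, 0 < t → P.p j j t = 0) :
    ∀ (n : ℕ) (L : List ℝ), L.length ≤ n → L.Pairwise (· < ·) →
      ∀ (a : I) (T : ℝ), 0 < T → (∀ u ∈ L, 0 < u ∧ u < T) →
      (L.map (fun u => P.p a j u * P.p j b (T - u))).sum ≤ P.p a b T := by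
  classical
  intro n
  induction n with
  | zero =>
      intro L hlen _ a T hT _
      have : L = [] := List.length_eq_zero_iff.mp (Nat.le_zero.mp hlen)
      subst this
      simpa using P.nonneg a b T hT
  | succ n ih =>
      intro L hlen hsort a T hT hmem
      cases L with
      | nil => simpa using P.nonneg a b T hT
      | cons u₁ L' =>
        have hu₁ : 0 < u₁ := (hmem u₁ (by simp)).1
        have hu₁T : u₁ < T := (hmem u₁ (by simp)).2
        have hT' : 0 < T - u₁ := by linarith
        have hlt : ∀ u ∈ L', u₁ < u := fun u hu => (List.pairwise_cons.mp hsort).1 u hu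
        have hsort' : L'.Pairwise (· < ·) := (List.pairwise_cons.mp hsort).2
        -- minorant
        set g : I → ℝ := fun m =>
          (if m = j then P.p a j u₁ * P.p j b (T - u₁) else 0) +
          (L'.map (fun u => P.p a m u₁ * P.p m j (u - u₁) * P.p j b (T - u))).sum with hg
        have hsumm_term : ∀ u ∈ L', Summable
            (fun m => P.p a m u₁ * P.p m j (u - u₁) * P.p j b (T - u)) := by
          intro u hu
          exact (P.summable a j u₁ (u - u₁) hu₁ (by linarith [hlt u hu])).mul_right _
        have hgsumm : Summable g := by
          apply Summable.add
          · exact summable_of_ne_finset_zero (s := {j}) (by intro m hm; simp at hm; simp [hm])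
          · exact listSummable L' hsumm_term
        have hchap : P.p a b T = ∑' m, P.p a m u₁ * P.p m b (T - u₁) := by
          have := P.chapman a b u₁ (T - u₁) hu₁ hT'
          simpa using this
        -- pointwise bound g m ≤ p a m u₁ * p m b (T-u₁)
        have hle : ∀ m, g m ≤ P.p a m u₁ * P.p m b (T - u₁) := by
          intro m
          have hIH : (L'.map (fun u => P.p m j (u - u₁) * P.p j b (T - u))).sum
              ≤ P.p m b (T - u₁) := by
            have h0 := ih (L'.map (fun u => u - u₁))
              (by simpa using Nat.le_of_succ_le_succ hlen)
              (List.Pairwise.map _ (fun _ _ h => sub_lt_sub_right h u₁) hsort')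
              m (T - u₁) hT'
              (by
                intro v hv
                simp only [List.mem_map] at hv
                obtain ⟨u, hu, rfl⟩ := hv
                exact ⟨by linarith [hlt u hu], by linarith [(hmem u (by simp [hu])).2]⟩)
            rw [List.map_map] at h0
            have heq : L'.map ((fun u => P.p m j u * P.p j b (T - u₁ - u)) ∘ (fun u => u - u₁))
                = L'.map (fun u => P.p m j (u - u₁) * P.p j b (T - u)) := by
              apply List.map_congr_left
              intro u _
              simp only [Function.comp]
              have : T - u₁ - (u - u₁) = T - u := by ring
              rw [this]
            rwa [heq] at h0
          by_cases hm : m = j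
          · rw [hm]
            have hz : (L'.map (fun u => P.p a j u₁ * P.p j j (u - u₁) * P.p j b (T - u))).sum = 0 := by
              apply List.sum_eq_zero
              intro x hx
              simp only [List.mem_map] at hx
              obtain ⟨u, hu, rfl⟩ := hx
              rw [hjj (u - u₁) (by linarith [hlt u hu])]
              ring
            simp [hg, hz]
          · have hnn : 0 ≤ P.p a m u₁ := P.nonneg a m u₁ hu₁
            have : (L'.map (fun u => P.p a m u₁ * P.p m j (u - u₁) * P.p j b (T - u))).sum
                = P.p a m u₁ * (L'.map (fun u => P.p m j (u - u₁) * P.p j b (T - u))).sum := by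
              rw [← List.sum_map_mul_left]
              congr 1
              apply List.map_congr_left
              intro u _
              ring
            simp only [hg, if_neg hm, zero_add, this]
            exact mul_le_mul_of_nonneg_left hIH hnn
        -- compute tsum of g
        have htsumg : ∑' m, g m = P.p a j u₁ * P.p j b (T - u₁) +
            (L'.map (fun u => P.p a j u * P.p j b (T - u))).sum := by
          rw [hg]
          rw [Summable.tsum_add (summable_of_ne_finset_zero (s := {j})
                (by intro m hm; simp at hm; simp [hm]))
              (listSummable L' hsumm_term)]
          congr 1
          · exact tsum_ite_eq j _
          · rw [listTsum L' hsumm_term]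
            congr 1
            apply List.map_congr_left
            intro u hu
            have h1 : ∑' m, P.p a m u₁ * P.p m j (u - u₁) * P.p j b (T - u)
                = (∑' m, P.p a m u₁ * P.p m j (u - u₁)) * P.p j b (T - u) :=
              tsum_mul_right
            rw [h1, ← P.chapman a j u₁ (u - u₁) hu₁ (by linarith [hlt u hu])]
            congr 2
            ring
        calc ((u₁ :: L').map (fun u => P.p a j u * P.p j b (T - u))).sum
            = ∑' m, g m := by
              simp only [List.map_cons, List.sum_cons, htsumg]
          _ ≤ ∑' m, P.p a m u₁ * P.p m b (T - u₁) :=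
              Summable.tsum_le_tsum hle hgsumm (P.summable a b u₁ (T - u₁) hu₁ hT')
          _ = P.p a b T := hchap.symm

theorem stmt4 {I : Type*} [Countable I] (P : PosMatrixSemigroup I) (j : I)
    (hjj : ∀ t, 0 < t → P.p j j t = 0)
    (i : I) (t₁ : ℝ) (ht₁ : 0 < t₁) (hij : 0 < P.p i j t₁) :
    ∀ (k : I) (t : ℝ), 0 < t → P.p j k t = 0 := by
  by_contra hcon
  push_neg at hcon
  obtain ⟨k, t, ht, hk⟩ := hcon
  have hjk : 0 < P.p j k t := lt_of_le_of_ne (P.nonneg j k t ht) (Ne.symm hk)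
  set c₁ : ℝ := P.p i j t₁ / 2 with hc₁
  set c₂ : ℝ := P.p j k t / 2 with hc₂
  have hc₁0 : 0 < c₁ := by positivity
  have hc₂0 : 0 < c₂ := by positivity
  -- continuity neighborhoods
  have h1 : ∀ᶠ u in nhdsWithin t₁ (Set.Ioi 0), c₁ < P.p i j u :=
    (P.cont i j t₁ (Set.mem_Ioi.mpr ht₁)).eventually (eventually_gt_nhds (by linarith))
  have h2 : ∀ᶠ u in nhdsWithin t (Set.Ioi 0), c₂ < P.p j k u :=
    (P.cont j k t (Set.mem_Ioi.mpr ht)).eventually (eventually_gt_nhds (by linarith))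
  obtain ⟨δ₁, hδ₁0, hδ₁⟩ := Metric.mem_nhdsWithin_iff.mp h1
  obtain ⟨δ₂, hδ₂0, hδ₂⟩ := Metric.mem_nhdsWithin_iff.mp h2
  set δ : ℝ := min δ₁ (min δ₂ t) / 2 with hδdef
  have hδ0 : 0 < δ := by positivity
  have hδa : δ < δ₁ := by
    have : min δ₁ (min δ₂ t) ≤ δ₁ := min_le_left _ _
    simp only [hδdef]; linarith
  have hδb : δ < δ₂ := by
    have : min δ₁ (min δ₂ t) ≤ δ₂ := le_trans (min_le_right _ _) (min_le_left _ _)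
    simp only [hδdef]; linarith
  have hδt : δ < t := by
    have : min δ₁ (min δ₂ t) ≤ t := le_trans (min_le_right _ _) (min_le_right _ _)
    simp only [hδdef]; linarith
  have hbound : ∀ ε : ℝ, 0 < ε → ε ≤ δ →
      c₁ * c₂ ≤ P.p i j (t₁ + ε) * P.p j k (t - ε) := by
    intro ε hε hεδ
    have hA : c₁ < P.p i j (t₁ + ε) := by
      apply hδ₁
      constructor
      · simp only [Metric.mem_ball, Real.dist_eq]
        rw [abs_of_pos (by linarith : (0:ℝ) < t₁ + ε - t₁)]
        linarith
      · exact Set.mem_Ioi.mpr (by linarith)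
    have hB : c₂ < P.p j k (t - ε) := by
      apply hδ₂
      constructor
      · simp only [Metric.mem_ball, Real.dist_eq]
        rw [abs_of_neg (by linarith : t - ε - t < 0)]
        linarith
      · exact Set.mem_Ioi.mpr (by linarith)
    exact mul_le_mul hA.le hB.le hc₂0.le (by linarith)
  set T : ℝ := t₁ + t with hT
  have hT0 : 0 < T := by simp only [hT]; linarith
  have main : ∀ n : ℕ, (n : ℝ) * (c₁ * c₂) ≤ P.p i k T := by
    intro n
    rcases Nat.eq_zero_or_pos n with rfl | hn
    · simpa using P.nonneg i k T hT0
    have hn0 : (0:ℝ) < n := by exact_mod_cast hn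
    set e : ℕ → ℝ := fun r => t₁ + δ * (r + 1) / n with he
    have hεmem : ∀ r : ℕ, r < n → 0 < δ * (r + 1) / n ∧ δ * (r + 1) / n ≤ δ := by
      intro r hr
      constructor
      · positivity
      · rw [div_le_iff₀ hn0]
        have : (r : ℝ) + 1 ≤ n := by exact_mod_cast hr
        nlinarith
    set L : List ℝ := (List.range n).map e with hL
    have hsort : L.Pairwise (· < ·) := by
      apply List.Pairwise.map
      · intro x y hxy
        simp only [he]
        have : (x : ℝ) < y := by exact_mod_cast hxy
        have h1 : δ * ((x:ℝ) + 1) / n < δ * ((y:ℝ) + 1) / n := by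
          gcongr
        linarith
      · exact List.pairwise_lt_range (n := n)
    have hkey := key P j k hjj n L (by simp [hL]) hsort i T hT0
      (by
        intro u hu
        simp only [hL, List.mem_map, List.mem_range] at hu
        obtain ⟨r, hr, rfl⟩ := hu
        obtain ⟨hp, hle⟩ := hεmem r hr
        constructor
        · simp only [he]; linarith
        · simp only [he, hT]; linarith)
    refine le_trans ?_ hkey
    -- lower bound the sum
    have hterm : ∀ r ∈ List.range n,
        c₁ * c₂ ≤ P.p i j (e r) * P.p j k (T - e r) := by
      intro r hr
      simp only [List.mem_range] at hr
      obtain ⟨hp, hle⟩ := hεmem r hr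
      have : T - e r = t - δ * (r + 1) / n := by simp only [he, hT]; ring
      rw [this]
      simpa only [he] using hbound (δ * (r + 1) / n) hp hle
    calc (n : ℝ) * (c₁ * c₂)
        = ((List.range n).map (fun _ : ℕ => c₁ * c₂)).sum := by
          simp [List.map_const', List.sum_replicate, nsmul_eq_mul]
      _ ≤ ((List.range n).map (fun r => P.p i j (e r) * P.p j k (T - e r))).sum :=
          List.sum_le_sum hterm
      _ = (L.map (fun u => P.p i j u * P.p j k (T - u))).sum := by
          rw [hL, List.map_map]
          rfl
  obtain ⟨n, hnn⟩ := exists_nat_gt (P.p i k T / (c₁ * c₂))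
  have : P.p i k T < n * (c₁ * c₂) := by
    rw [div_lt_iff₀ (by positivity)] at hnn
    exact hnn
  linarith [main n]
end

section
/- Let E be a sequence space (a sublattice of the space ℓ⁰ of all real sequences containing all unit vectors eⁱ), and let (T_t)_{t>0} be a positive one-parameter semigroup of sequentially order continuous linear operators on E such that t ↦ (T_t eⁱ)_j is continuous on (0,∞) for all i, j ∈ ℕ. Then the family p_{ij}(t) := (T_t eⁱ)_j satisfies the Chapman–Kolmogorov equation: (T_{t+s} eⁱ)_j = Σ_{k∈ℕ} (T_t eⁱ)_k · (T_s eᵏ)_j for all t, s > 0 and i, j ∈ ℕ. -/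
/-- A sequence space: a sublattice of the vector lattice `ℓ⁰ = ℕ → ℝ` of all real
sequences (with componentwise order) containing all unit vectors. -/
structure SequenceSpace where
  carrier : Submodule ℝ (ℕ → ℝ)
  sup_mem : ∀ x y : ℕ → ℝ, x ∈ carrier → y ∈ carrier → x ⊔ y ∈ carrier
  single_mem : ∀ i : ℕ, (Pi.single i 1 : ℕ → ℝ) ∈ carrier

/-- The `i`-th unit vector as an element of a sequence space. -/
def SequenceSpace.unitVec (E : SequenceSpace) (i : ℕ) : E.carrier :=
  ⟨Pi.single i 1, E.single_mem i⟩

/-- Order convergence of a sequence in a sequence space: order boundedness plus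
componentwise convergence. -/
def OrderConv (E : SequenceSpace) (x : ℕ → E.carrier) (l : E.carrier) : Prop :=
  (∃ b : E.carrier, ∀ k n, |(x k : ℕ → ℝ) n| ≤ (b : ℕ → ℝ) n) ∧
    ∀ n, Filter.Tendsto (fun k => (x k : ℕ → ℝ) n) Filter.atTop (nhds ((l : ℕ → ℝ) n))

/-- A sequentially order continuous operator maps order convergent sequences to
order convergent sequences. -/
def SeqOrderCont (E : SequenceSpace) (T : E.carrier →ₗ[ℝ] E.carrier) : Prop :=
  ∀ x l, OrderConv E x l → OrderConv E (fun k => T (x k)) (T l)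

/-- A positive operator on a sequence space. -/
def PositiveOp (E : SequenceSpace) (T : E.carrier →ₗ[ℝ] E.carrier) : Prop :=
  ∀ x : E.carrier, (∀ n, 0 ≤ (x : ℕ → ℝ) n) → ∀ n, 0 ≤ (T x : ℕ → ℝ) n

theorem stmt9 (E : SequenceSpace) (T : ℝ → (E.carrier →ₗ[ℝ] E.carrier))
    (hsg : ∀ t s : ℝ, 0 < t → 0 < s → T (t + s) = (T t).comp (T s))
    (hpos : ∀ t : ℝ, 0 < t → PositiveOp E (T t))
    (hoc : ∀ t : ℝ, 0 < t → SeqOrderCont E (T t))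
    (hcont : ∀ i j : ℕ,
      ContinuousOn (fun t : ℝ => (T t (E.unitVec i) : ℕ → ℝ) j) (Set.Ioi 0)) :
    ∀ t s : ℝ, 0 < t → 0 < s → ∀ i j : ℕ,
      (T (t + s) (E.unitVec i) : ℕ → ℝ) j =
        ∑' k : ℕ, (T t (E.unitVec i) : ℕ → ℝ) k * (T s (E.unitVec k) : ℕ → ℝ) j := by
  intro t s ht hs i j
  -- y = T t eⁱ is nonnegative
  set y : E.carrier := T t (E.unitVec i) with hy
  have hy_nonneg : ∀ n, 0 ≤ (y : ℕ → ℝ) n := by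
    apply hpos t ht
    intro n
    simp [SequenceSpace.unitVec, Pi.single_apply]
    positivity
  -- partial sums of y as elements of E
  set xn : ℕ → E.carrier := fun n => ∑ k ∈ Finset.range n, (y : ℕ → ℝ) k • E.unitVec k
    with hxn
  have hxn_coe : ∀ n m, ((xn n : ℕ → ℝ)) m = if m < n then (y : ℕ → ℝ) m else 0 := by
    intro n m
    have : ((xn n : ℕ → ℝ)) m
        = ∑ k ∈ Finset.range n, (y : ℕ → ℝ) k * ((Pi.single k 1 : ℕ → ℝ)) m := by
      simp [hxn, SequenceSpace.unitVec]
    rw [this]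
    simp only [Pi.single_apply, mul_ite, mul_one, mul_zero]
    rw [Finset.sum_ite_eq (Finset.range n) m (fun k => (y : ℕ → ℝ) k)]
    simp [Finset.mem_range]
  have hconv : OrderConv E xn y := by
    constructor
    · refine ⟨y, fun k n => ?_⟩
      rw [hxn_coe]
      by_cases h : n < k <;> simp [h, abs_of_nonneg (hy_nonneg n), hy_nonneg n]
    · intro n
      apply Filter.Tendsto.congr' (f₁ := fun _ => (y : ℕ → ℝ) n)
      · filter_upwards [Filter.eventually_ge_atTop (n+1)] with k hk
        rw [hxn_coe]
        simp [Nat.lt_of_lt_of_le (Nat.lt_succ_self n) hk]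
      · exact tendsto_const_nhds
  have hTs := (hoc s hs xn y hconv).2 j
  -- compute T s (xn n) componentwise
  have hTs_coe : ∀ n, ((T s (xn n) : ℕ → ℝ)) j
      = ∑ k ∈ Finset.range n, (y : ℕ → ℝ) k * (T s (E.unitVec k) : ℕ → ℝ) j := by
    intro n
    simp [hxn, map_sum, map_smul]
  have htend : Filter.Tendsto
      (fun n => ∑ k ∈ Finset.range n, (y : ℕ → ℝ) k * (T s (E.unitVec k) : ℕ → ℝ) j)
      Filter.atTop (nhds ((T s y : ℕ → ℝ) j)) := by
    refine hTs.congr fun n => ?_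
    exact hTs_coe n
  have hterm_nonneg : ∀ k, 0 ≤ (y : ℕ → ℝ) k * (T s (E.unitVec k) : ℕ → ℝ) j := by
    intro k
    have h1 : 0 ≤ (T s (E.unitVec k) : ℕ → ℝ) j := by
      apply hpos s hs
      intro n
      simp [SequenceSpace.unitVec, Pi.single_apply]
      positivity
    exact mul_nonneg (hy_nonneg k) h1
  have hsum : HasSum (fun k => (y : ℕ → ℝ) k * (T s (E.unitVec k) : ℕ → ℝ) j)
      ((T s y : ℕ → ℝ) j) :=
    (hasSum_iff_tendsto_nat_of_nonneg hterm_nonneg _).2 htend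
  have hfinal : (T (t + s) (E.unitVec i) : ℕ → ℝ) j = (T s y : ℕ → ℝ) j := by
    rw [add_comm, hsg s t hs ht]
    simp [hy]
  rw [hfinal, hsum.tsum_eq]
end

section
/- Let p be a positive matrix semigroup over ℕ and define E := { x ∈ ℓ⁰ : Σ_n |x_n| p_{nm}(t) < ∞ for all t > 0 and all m ∈ ℕ }. Then E is a sublattice (indeed an ideal) of ℓ⁰ containing all unit vectors, the maps T_t x := ( Σ_n x_n p_{nm}(t) )_m are well-defined linear operators from E to E, and (T_t)_{t>0} is a positive one-parameter semigroup of sequentially order continuous operators on E with (T_t eⁿ)_m = p_{nm}(t). -/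
section Aux

variable (P : PosMatrixSemigroup ℕ)

/-- Membership predicate for E. -/
def memE (x : ℕ → ℝ) : Prop := ∀ t, 0 < t → ∀ m, Summable fun n => |x n| * P.p n m t

lemma prod_summable {x : ℕ → ℝ} (hx : memE P x) {t s : ℝ} (ht : 0 < t) (hs : 0 < s)
    (j : ℕ) : Summable (fun q : ℕ × ℕ => |x q.1| * P.p q.1 q.2 t * P.p q.2 j s) := by
  have hnn : (0 : ℕ × ℕ → ℝ) ≤ fun q : ℕ × ℕ => |x q.1| * P.p q.1 q.2 t * P.p q.2 j s := by
    intro q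
    exact mul_nonneg (mul_nonneg (abs_nonneg _) (P.nonneg _ _ _ ht)) (P.nonneg _ _ _ hs)
  refine (summable_prod_of_nonneg hnn).mpr ⟨fun n => ?_, ?_⟩
  · simpa only [mul_assoc] using ((P.summable n j t s ht hs).mul_left |x n|)
  · have key : ∀ n : ℕ, (∑' m, |x n| * P.p n m t * P.p m j s) = |x n| * P.p n j (t + s) := by
      intro n
      rw [P.chapman n j t s ht hs]
      simp only [mul_assoc]
      exact tsum_mul_left
    simpa only [key] using hx (t + s) (by linarith) j

lemma col_summable {x : ℕ → ℝ} (hx : memE P x) {t s : ℝ} (ht : 0 < t) (hs : 0 < s)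
    (j : ℕ) : Summable (fun m : ℕ => (∑' n, |x n| * P.p n m t) * P.p m j s) := by
  have hsw := (prod_summable P hx ht hs j).prod_symm
  have hnn : (0 : ℕ × ℕ → ℝ) ≤ fun q : ℕ × ℕ => |x q.2| * P.p q.2 q.1 t * P.p q.1 j s := by
    intro q
    exact mul_nonneg (mul_nonneg (abs_nonneg _) (P.nonneg _ _ _ ht)) (P.nonneg _ _ _ hs)
  have := ((summable_prod_of_nonneg hnn).mp hsw).2
  have key : ∀ m : ℕ, (∑' n, |x n| * P.p n m t * P.p m j s)
      = (∑' n, |x n| * P.p n m t) * P.p m j s := fun m => tsum_mul_right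
  simpa only [key] using this

lemma signed_summable {x : ℕ → ℝ} (hx : memE P x) {t : ℝ} (ht : 0 < t) (m : ℕ) :
    Summable (fun n => x n * P.p n m t) := by
  refine Summable.of_abs ?_
  have : (fun n => |x n * P.p n m t|) = fun n => |x n| * P.p n m t := by
    funext n; rw [abs_mul, abs_of_nonneg (P.nonneg _ _ _ ht)]
  rw [this]; exact hx t ht m

lemma abs_tsum_le {x : ℕ → ℝ} (hx : memE P x) {t : ℝ} (ht : 0 < t) (m : ℕ) :
    |∑' n, x n * P.p n m t| ≤ ∑' n, |x n| * P.p n m t := by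
  have h := norm_tsum_le_tsum_norm (f := fun n => x n * P.p n m t) ?_
  · simpa only [Real.norm_eq_abs, abs_mul, abs_of_nonneg (P.nonneg _ _ _ ht)] using h
  · simp only [Real.norm_eq_abs, abs_mul]
    have : (fun n => |x n| * |P.p n m t|) = fun n => |x n| * P.p n m t := by
      funext n; rw [abs_of_nonneg (P.nonneg _ _ _ ht)]
    rw [this]; exact hx t ht m

lemma Tmem {x : ℕ → ℝ} (hx : memE P x) {t : ℝ} (ht : 0 < t) :
    memE P (fun m => ∑' n, x n * P.p n m t) := by
  intro s hs j
  refine Summable.of_nonneg_of_le (fun m => mul_nonneg (abs_nonneg _) (P.nonneg _ _ _ hs))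
    (fun m => ?_) (col_summable P hx ht hs j)
  exact mul_le_mul_of_nonneg_right (abs_tsum_le P hx ht m) (P.nonneg _ _ _ hs)

end Aux

theorem stmt11 (P : PosMatrixSemigroup ℕ)
    (Eset : Set (ℕ → ℝ))
    (hE : Eset = {x : ℕ → ℝ | ∀ t, 0 < t → ∀ m, Summable fun n => |x n| * P.p n m t})
    (Tmap : ℝ → (ℕ → ℝ) → (ℕ → ℝ))
    (hT : Tmap = fun t x m => ∑' n, x n * P.p n m t) :
    -- E is a linear subspace of ℓ⁰ …
    (∀ x y, x ∈ Eset → y ∈ Eset → x + y ∈ Eset) ∧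
    (∀ (c : ℝ) (x), x ∈ Eset → c • x ∈ Eset) ∧
    -- … which is an ideal (hence a sublattice) …
    (∀ x y, x ∈ Eset → (∀ n, |y n| ≤ |x n|) → y ∈ Eset) ∧
    -- … containing all unit vectors,
    (∀ n : ℕ, (Pi.single n 1 : ℕ → ℝ) ∈ Eset) ∧
    -- each T_t is a well-defined linear operator from E to E,
    (∀ t, 0 < t → ∀ x, x ∈ Eset → Tmap t x ∈ Eset) ∧
    (∀ t, 0 < t → ∀ x y, x ∈ Eset → y ∈ Eset → Tmap t (x + y) = Tmap t x + Tmap t y) ∧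
    (∀ t, 0 < t → ∀ (c : ℝ) (x), x ∈ Eset → Tmap t (c • x) = c • Tmap t x) ∧
    -- (T_t) is a one-parameter semigroup,
    (∀ t s, 0 < t → 0 < s → ∀ x, x ∈ Eset → Tmap (t + s) x = Tmap s (Tmap t x)) ∧
    -- each T_t is positive,
    (∀ t, 0 < t → ∀ x, x ∈ Eset → (∀ n, 0 ≤ x n) → ∀ m, 0 ≤ Tmap t x m) ∧
    -- each T_t is sequentially order continuous,
    (∀ t, 0 < t → ∀ (xk : ℕ → ℕ → ℝ) (x : ℕ → ℝ), (∀ k, xk k ∈ Eset) → x ∈ Eset →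
      (∃ b ∈ Eset, ∀ k n, |xk k n| ≤ b n) →
      (∀ n, Filter.Tendsto (fun k => xk k n) Filter.atTop (nhds (x n))) →
      (∃ b ∈ Eset, ∀ k n, |Tmap t (xk k) n| ≤ b n) ∧
        (∀ n, Filter.Tendsto (fun k => Tmap t (xk k) n) Filter.atTop (nhds (Tmap t x n)))) ∧
    -- and (T_t e^n)_m = p_{nm}(t).
    (∀ t, 0 < t → ∀ n m : ℕ, Tmap t (Pi.single n 1) m = P.p n m t) := by
  subst hE hT
  have hmem : ∀ x : ℕ → ℝ,
      x ∈ {x : ℕ → ℝ | ∀ t, 0 < t → ∀ m, Summable fun n => |x n| * P.p n m t} ↔ memE P x :=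
    fun x => Iff.rfl
  refine ⟨?_, ?_, ?_, ?_, ?_, ?_, ?_, ?_, ?_, ?_, ?_⟩
  · -- addition
    intro x y hx hy
    rw [hmem] at hx hy ⊢
    intro t ht m
    refine Summable.of_nonneg_of_le
      (fun n => mul_nonneg (abs_nonneg _) (P.nonneg _ _ _ ht)) (fun n => ?_)
      ((hx t ht m).add (hy t ht m))
    have : |(x + y) n| ≤ |x n| + |y n| := abs_add_le _ _
    calc |(x + y) n| * P.p n m t ≤ (|x n| + |y n|) * P.p n m t :=
          mul_le_mul_of_nonneg_right this (P.nonneg _ _ _ ht)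
      _ = |x n| * P.p n m t + |y n| * P.p n m t := add_mul _ _ _
  · -- scalar multiplication
    intro c x hx
    rw [hmem] at hx ⊢
    intro t ht m
    have : (fun n => |(c • x) n| * P.p n m t) = fun n => |c| * (|x n| * P.p n m t) := by
      funext n
      simp [abs_mul, mul_assoc]
    rw [this]
    exact (hx t ht m).mul_left _
  · -- ideal
    intro x y hx hle
    rw [hmem] at hx ⊢
    intro t ht m
    refine Summable.of_nonneg_of_le
      (fun n => mul_nonneg (abs_nonneg _) (P.nonneg _ _ _ ht)) (fun n => ?_) (hx t ht m)
    exact mul_le_mul_of_nonneg_right (hle n) (P.nonneg _ _ _ ht)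
  · -- unit vectors
    intro n
    rw [hmem]
    intro t ht m
    refine summable_of_ne_finset_zero (s := {n}) fun k hk => ?_
    simp only [Finset.mem_singleton] at hk
    rw [Pi.single_eq_of_ne hk]
    simp
  · -- T_t maps E to E
    intro t ht x hx
    rw [hmem] at hx ⊢
    exact Tmem P hx ht
  · -- additivity
    intro t ht x y hx hy
    rw [hmem] at hx hy
    funext m
    show (∑' n, (x + y) n * P.p n m t) = (∑' n, x n * P.p n m t) + ∑' n, y n * P.p n m t
    rw [← Summable.tsum_add (signed_summable P hx ht m) (signed_summable P hy ht m)]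
    congr 1; funext n; simp [add_mul]
  · -- homogeneity
    intro t ht c x hx
    funext m
    show (∑' n, (c • x) n * P.p n m t) = c • ∑' n, x n * P.p n m t
    simp only [Pi.smul_apply, smul_eq_mul, mul_assoc]
    exact tsum_mul_left
  · -- semigroup property
    intro t s ht hs x hx
    rw [hmem] at hx
    funext j
    show (∑' n, x n * P.p n j (t + s)) = ∑' m, (∑' n, x n * P.p n m t) * P.p m j s
    have hprod : Summable (fun q : ℕ × ℕ => x q.1 * P.p q.1 q.2 t * P.p q.2 j s) := by
      refine Summable.of_abs ?_
      have : (fun q : ℕ × ℕ => |x q.1 * P.p q.1 q.2 t * P.p q.2 j s|)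
          = fun q : ℕ × ℕ => |x q.1| * P.p q.1 q.2 t * P.p q.2 j s := by
        funext q
        rw [abs_mul, abs_mul, abs_of_nonneg (P.nonneg _ _ _ ht),
          abs_of_nonneg (P.nonneg _ _ _ hs)]
      rw [this]
      exact prod_summable P hx ht hs j
    have h1 : ∀ n : ℕ, Summable fun m => x n * P.p n m t * P.p m j s := by
      intro n
      simpa only [mul_assoc] using (P.summable n j t s ht hs).mul_left (x n)
    have h2 : ∀ m : ℕ, Summable fun n => x n * P.p n m t * P.p m j s :=
      fun m => (signed_summable P hx ht m).mul_right _
    have hcomm := Summable.tsum_comm' (f := fun n m => x n * P.p n m t * P.p m j s) hprod h1 h2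
    calc (∑' n, x n * P.p n j (t + s))
        = ∑' n, ∑' m, x n * P.p n m t * P.p m j s := by
          congr 1; funext n
          rw [P.chapman n j t s ht hs]
          simp only [mul_assoc]
          exact tsum_mul_left.symm
      _ = ∑' m, ∑' n, x n * P.p n m t * P.p m j s := hcomm.symm
      _ = ∑' m, (∑' n, x n * P.p n m t) * P.p m j s := by
          congr 1; funext m; exact tsum_mul_right
  · -- positivity
    intro t ht x hx hpos m
    exact tsum_nonneg fun n => mul_nonneg (hpos n) (P.nonneg _ _ _ ht)
  · -- sequential order continuity
    intro t ht xk x hxk hx hbd hconv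
    obtain ⟨b, hb, hble⟩ := hbd
    rw [hmem] at hx hb
    have hxk' : ∀ k, memE P (xk k) := fun k => hxk k
    have hbnn : ∀ n, 0 ≤ b n := fun n => le_trans (abs_nonneg _) (hble 0 n)
    have hbabs : ∀ t', 0 < t' → ∀ m, Summable fun n => b n * P.p n m t' := by
      intro t' ht' m
      have := hb t' ht' m
      simpa only [abs_of_nonneg (hbnn _)] using this
    constructor
    · refine ⟨fun m => ∑' n, b n * P.p n m t, ?_, ?_⟩
      · rw [hmem]
        exact Tmem P hb ht
      · intro k m
        calc |∑' n, xk k n * P.p n m t| ≤ ∑' n, |xk k n| * P.p n m t :=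
              abs_tsum_le P (hxk' k) ht m
          _ ≤ ∑' n, b n * P.p n m t := by
              refine Summable.tsum_le_tsum (fun n => ?_) (hxk' k t ht m) (hbabs t ht m)
              exact mul_le_mul_of_nonneg_right (hble k n) (P.nonneg _ _ _ ht)
    · intro m
      refine tendsto_tsum_of_dominated_convergence (bound := fun n => b n * P.p n m t)
        (hbabs t ht m) (fun n => (hconv n).mul_const _) ?_
      filter_upwards with k n
      rw [Real.norm_eq_abs, abs_mul, abs_of_nonneg (P.nonneg _ _ _ ht)]
      exact mul_le_mul_of_nonneg_right (hble k n) (P.nonneg _ _ _ ht)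
  · -- unit vector image
    intro t ht n m
    show (∑' k, (Pi.single n 1 : ℕ → ℝ) k * P.p k m t) = P.p n m t
    have h0 : ∀ k, k ≠ n → (Pi.single n 1 : ℕ → ℝ) k * P.p k m t = 0 := by
      intro k hk
      rw [Pi.single_eq_of_ne hk, zero_mul]
    rw [tsum_eq_single n h0, Pi.single_eq_same, one_mul]
end

section
/- Let (T_t)_{t>0} be a positive semigroup of bounded linear operators on ℓᵖ(ℝ) (1 ≤ p < ∞) such that t ↦ T_t f is continuous on (0,∞) for all f. Then for each f ∈ ℓᵖ(ℝ)₊ the set { r ∈ ℝ : (T_t f)(r) > 0 for some t > 0 } is at most countable. -/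
theorem stmt12 (q : ENNReal) [hq1 : Fact (1 ≤ q)] (hq2 : q ≠ ⊤)
    (T : ℝ → lp (fun _ : ℝ => ℝ) q →L[ℝ] lp (fun _ : ℝ => ℝ) q)
    (hsg : ∀ t s : ℝ, 0 < t → 0 < s → T (t + s) = (T t).comp (T s))
    (hpos : ∀ t : ℝ, 0 < t → ∀ f : lp (fun _ : ℝ => ℝ) q,
      (∀ r : ℝ, 0 ≤ f r) → ∀ r : ℝ, 0 ≤ (T t f) r)
    (hcont : ∀ f : lp (fun _ : ℝ => ℝ) q,
      ContinuousOn (fun t : ℝ => T t f) (Set.Ioi 0))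
    (f : lp (fun _ : ℝ => ℝ) q) (hf : ∀ r : ℝ, 0 ≤ f r) :
    {r : ℝ | ∃ t : ℝ, 0 < t ∧ 0 < (T t f) r}.Countable := by
  have hq0 : q ≠ 0 := by
    have := hq1.out
    intro h; rw [h] at this; simp at this
  have hqt : 0 < q.toReal := ENNReal.toReal_pos hq0 hq2
  -- evaluation at a point is continuous (in fact 1-Lipschitz)
  have heval : ∀ r : ℝ, Continuous fun g : lp (fun _ : ℝ => ℝ) q => g r := by
    intro r
    refine Metric.continuous_iff.2 fun g ε hε => ⟨ε, hε, fun h hd => ?_⟩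
    have : ‖(h - g) r‖ ≤ ‖h - g‖ := lp.norm_apply_le_norm hq0 (h - g) r
    have h2 : (h - g) r = h r - g r := rfl
    calc dist (h r) (g r) = ‖h r - g r‖ := by rw [Real.dist_eq]; rfl
      _ ≤ ‖h - g‖ := by rw [← h2]; exact this
      _ = dist h g := (dist_eq_norm h g).symm
      _ < ε := hd
  -- countable support for each lp element
  have hsupp : ∀ g : lp (fun _ : ℝ => ℝ) q, {r : ℝ | g r ≠ 0}.Countable := by
    intro g
    have hs : Summable fun r : ℝ => ‖g r‖ ^ q.toReal := (lp.memℓp g).summable hqt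
    have := hs.countable_support
    refine Set.Countable.mono ?_ this
    intro r hr
    simp only [Function.mem_support]
    intro h
    rw [Real.rpow_eq_zero (norm_nonneg _) hqt.ne'] at h
    exact hr (norm_eq_zero.mp h)
  -- the set is contained in the union over rational times
  have hsub : {r : ℝ | ∃ t : ℝ, 0 < t ∧ 0 < (T t f) r} ⊆
      ⋃ s : {s : ℚ // 0 < s}, {r : ℝ | (T (s : ℝ) f) r ≠ 0} := by
    rintro r ⟨t, ht, htr⟩
    have hc : ContinuousOn (fun u : ℝ => (T u f) r) (Set.Ioi 0) :=
      (heval r).comp_continuousOn (hcont f)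
    -- the set of times where the value is positive is open in Ioi 0
    have hopen : IsOpen ((Set.Ioi (0:ℝ)) ∩ (fun u : ℝ => (T u f) r) ⁻¹' Set.Ioi 0) := by
      exact hc.isOpen_inter_preimage isOpen_Ioi (isOpen_Ioi (a := (0 : ℝ)))
    have hmem : t ∈ (Set.Ioi (0:ℝ)) ∩ (fun u : ℝ => (T u f) r) ⁻¹' Set.Ioi 0 := ⟨ht, htr⟩
    obtain ⟨ε, hε, hball⟩ := Metric.isOpen_iff.1 hopen t hmem
    obtain ⟨s, hs1, hs2⟩ := exists_rat_btwn (show t - ε < t by linarith)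
    have hsball : (s : ℝ) ∈ Metric.ball t ε := by
      rw [Metric.mem_ball, Real.dist_eq, abs_sub_lt_iff]; constructor <;> linarith
    have := hball hsball
    obtain ⟨hspos, hval⟩ := this
    refine Set.mem_iUnion.2 ⟨⟨s, by exact_mod_cast Set.mem_Ioi.mp hspos⟩, ?_⟩
    exact ne_of_gt hval
  exact (Set.countable_iUnion fun s => hsupp _).mono hsub
end

section
/- Let E be a Banach lattice, (T_t)_{t>0} a positive semigroup on E, f ∈ E₊ with T_t f → f as t ↓ 0. Then there exists a sequence t_n ↓ 0 and an increasing sequence (f_n) in E converging to f such that 0 ≤ f_n ≤ T_{t_n} f for all n. -/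
open Filter Finset

private lemma norm_posPart_le' {E : Type*} [NormedAddCommGroup E] [Lattice E] [HasSolidNorm E]
    [IsOrderedAddMonoid E] (a : E) :
    ‖a⁺‖ ≤ ‖a‖ := by
  apply HasSolidNorm.solid
  rw [abs_of_nonneg (posPart_nonneg a), posPart_def]
  exact sup_le (le_abs_self a) (abs_nonneg a)

theorem stmt14 {E : Type*} [NormedAddCommGroup E] [Lattice E] [HasSolidNorm E]
    [IsOrderedAddMonoid E] [NormedSpace ℝ E] [CompleteSpace E]
    (T : ℝ → E →L[ℝ] E)
    (hsg : ∀ t s : ℝ, 0 < t → 0 < s → T (t + s) = (T t).comp (T s))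
    (hpos : ∀ t : ℝ, 0 < t → ∀ x : E, 0 ≤ x → 0 ≤ T t x)
    (f : E) (hf : 0 ≤ f)
    (hconv : Filter.Tendsto (fun t : ℝ => T t f) (nhdsWithin 0 (Set.Ioi 0)) (nhds f)) :
    ∃ (ts : ℕ → ℝ) (g : ℕ → E),
      (∀ n, 0 < ts n) ∧ Antitone ts ∧ Filter.Tendsto ts Filter.atTop (nhds 0) ∧
      Monotone g ∧ Filter.Tendsto g Filter.atTop (nhds f) ∧
      ∀ n, 0 ≤ g n ∧ g n ≤ T (ts n) f := by
  -- Step 1: choose δ n from the convergence hypothesis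
  have key : ∀ n : ℕ, ∃ δ > 0, ∀ t : ℝ, 0 < t → t < δ → ‖T t f - f‖ < (1/2 : ℝ)^n := by
    intro n
    rw [Metric.tendsto_nhdsWithin_nhds] at hconv
    obtain ⟨δ, hδ, H⟩ := hconv ((1/2)^n) (by positivity)
    refine ⟨δ, hδ, fun t ht htδ => ?_⟩
    have := H (Set.mem_Ioi.mpr ht) (by rw [Real.dist_eq, sub_zero, abs_of_pos ht]; exact htδ)
    rwa [dist_eq_norm] at this
  choose δ hδpos hδ using key
  -- Step 2: construct the times ts n
  set d : ℕ → ℝ := fun n => min ((n+1 : ℝ)⁻¹) ((Finset.range (n+1)).inf' Finset.nonempty_range_add_one δ) with hd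
  set ts : ℕ → ℝ := fun n => d n / 2 with hts
  have hdpos : ∀ n, 0 < d n := by
    intro n
    refine lt_min (by positivity) ?_
    rw [Finset.lt_inf'_iff]
    exact fun b _ => hδpos b
  have htspos : ∀ n, 0 < ts n := fun n => by simpa [hts] using half_pos (hdpos n)
  have hdanti : Antitone d := by
    intro m n hmn
    have hmn' : (m+1:ℝ) ≤ n+1 := by exact_mod_cast Nat.succ_le_succ hmn
    refine min_le_min (by apply inv_anti₀ (by positivity) hmn') ?_
    rw [Finset.le_inf'_iff]
    intro b hb
    exact Finset.inf'_le δ (Finset.mem_range.mpr (lt_of_lt_of_le (Finset.mem_range.mp hb) (by omega)))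
  have htsanti : Antitone ts := fun m n hmn => by
    simp only [hts]; linarith [hdanti hmn]
  have htslt : ∀ n, ts n < δ n := by
    intro n
    have h1 : d n ≤ δ n := (min_le_right _ _).trans (Finset.inf'_le δ (Finset.mem_range.mpr (Nat.lt_succ_self n)))
    calc ts n = d n / 2 := rfl
      _ < d n := half_lt_self (hdpos n)
      _ ≤ δ n := h1
  have htsle : ∀ n, ts n ≤ (n+1 : ℝ)⁻¹ :=
    fun n => ((half_lt_self (hdpos n)).le).trans (min_le_left _ _)
  have hts0 : Tendsto ts atTop (nhds 0) := by
    refine squeeze_zero (fun n => (htspos n).le) htsle ?_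
    exact tendsto_one_div_add_atTop_nhds_zero_nat.congr (fun n => one_div _)
  -- Step 3: the norm bounds and summability
  have hbound : ∀ n, ‖T (ts n) f - f‖ < (1/2 : ℝ)^n := fun n => hδ n (ts n) (htspos n) (htslt n)
  set h : ℕ → E := fun n => (f - T (ts n) f)⁺ with hh
  have hsummable : Summable h := by
    refine Summable.of_norm_bounded summable_geometric_two (fun n => ?_)
    calc ‖h n‖ ≤ ‖f - T (ts n) f‖ := norm_posPart_le' _
      _ = ‖T (ts n) f - f‖ := by rw [norm_sub_rev]
      _ ≤ (1/2 : ℝ)^n := (hbound n).le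
  -- Step 4: the tail sums
  set S : ℕ → E := fun n => ∑' k, h (n + k) with hS
  have hSsum : ∀ n, Summable fun k => h (n + k) := by
    intro n
    have := (summable_nat_add_iff (f := h) n).mpr hsummable
    simpa [add_comm] using this
  have hSnonneg : ∀ n, 0 ≤ S n := fun n => tsum_nonneg (fun k => posPart_nonneg _)
  have hSsucc : ∀ n, S n = h n + S (n + 1) := by
    intro n
    have e : ∀ b : ℕ, n + (b + 1) = (n + 1) + b := fun b => by omega
    calc S n = h (n + 0) + ∑' b, h (n + (b + 1)) := Summable.tsum_eq_zero_add (hSsum n)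
      _ = h n + S (n + 1) := by
          rw [add_zero]
          congr 1
          exact tsum_congr fun b => by rw [e b]
  have hSanti : Antitone S := by
    refine antitone_nat_of_succ_le (fun n => ?_)
    rw [hSsucc n]
    exact le_add_of_nonneg_left (posPart_nonneg _)
  have hS0 : Tendsto S atTop (nhds 0) := by
    have heq : ∀ n, S n = (∑' k, h k) - ∑ i ∈ Finset.range n, h i := by
      intro n
      have := Summable.sum_add_tsum_nat_add (f := h) n hsummable
      rw [eq_sub_iff_add_eq, add_comm]
      simpa [add_comm] using this
    have : Tendsto (fun n => (∑' k, h k) - ∑ i ∈ Finset.range n, h i) atTop (nhds 0) := by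
      have := hsummable.hasSum.tendsto_sum_nat
      have h2 := (tendsto_const_nhds (x := ∑' k, h k) (f := atTop)).sub this
      simpa using h2
    exact (funext heq : S = _) ▸ this
  -- Step 5: define g
  set g : ℕ → E := fun n => (f - S n)⁺ with hg
  have hgmono : Monotone g := fun m n hmn =>
    posPart_mono (sub_le_sub_left (hSanti hmn) f)
  have hgconv : Tendsto g atTop (nhds f) := by
    have h1 : Tendsto (fun n => f - S n) atTop (nhds f) := by
      simpa using (tendsto_const_nhds (x := f) (f := atTop)).sub hS0
    have h2 := (continuous_posPart.tendsto f).comp h1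
    simpa [posPart_eq_self.mpr hf, hg, Function.comp_def] using h2
  refine ⟨ts, g, htspos, htsanti, hts0, hgmono, hgconv, fun n => ⟨posPart_nonneg _, ?_⟩⟩
  have h1 : f - T (ts n) f ≤ S n := by
    rw [hSsucc n]
    exact le_add_of_le_of_nonneg (le_posPart _) (hSnonneg _)
  have h2 : f - S n ≤ T (ts n) f := by
    rw [sub_le_iff_le_add]
    calc f = (f - T (ts n) f) + T (ts n) f := by abel
      _ ≤ S n + T (ts n) f := add_le_add_left h1 _
      _ = T (ts n) f + S n := add_comm _ _
  calc g n ≤ (T (ts n) f)⁺ := posPart_mono h2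
    _ = T (ts n) f := posPart_eq_self.mpr (hpos _ (htspos n) f hf)
end
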